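/- Fix τ > −2 and define, for p > 1, γ(p) = 2p + 2√(p(p−1)) − 1 and Γ(p) = ((2+τ)γ(p) + 2p + τ)/(p−1). Then Γ(p) = 2(2+τ)(1 + 1/(p−1) + √(1 + 1/(p−1))) + 2 for all p > 1; Γ is strictly decreasing on (1,∞) with Γ(p) → +∞ as p → 1⁺ and Γ(p) → 10 + 4τ as p → ∞. Consequently, for every N' > 10 + 4τ there is a unique p* > 1 with Γ(p*) = N', and this p* equals p_c(N',τ) = P_+(N',τ); moreover p_c(N',τ) is strictly decreasing in N' (for fixed τ) and strictly increasing in τ (for fixed N') on the region N' > 10 + 4τ. -/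

import Mathlib

open Set Filter

noncomputable section

/-- `γ(p) = 2p + 2√(p(p-1)) - 1`. -/
def gammaF (p : ℝ) : ℝ := 2 * p + 2 * Real.sqrt (p * (p - 1)) - 1

/-- `Γ(p) = ((2+τ)γ(p) + 2p + τ)/(p-1)`. -/
def GammaF (τ p : ℝ) : ℝ := ((2 + τ) * gammaF p + 2 * p + τ) / (p - 1)

/-- `P₊(N',τ)`, the critical exponent `p_c(N',τ)` in the range `N' > 10 + 4τ`. -/
def Pplus (N' τ : ℝ) : ℝ :=
  ((N' - 2) ^ 2 - 2 * (2 + τ) * (N' + τ)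
      + 2 * (2 + τ) * Real.sqrt ((2 + τ) * (2 * N' + τ - 2)))
    / ((N' - 2) * (N' - 4 * τ - 10))

lemma gamma_id (τ p : ℝ) (hp : 1 < p) :
    GammaF τ p = 2 * (2 + τ) * (1 + 1 / (p - 1) + Real.sqrt (1 + 1 / (p - 1))) + 2 := by
  have hp0 : (0:ℝ) < p - 1 := by linarith
  have h1 : p * (p - 1) = (p - 1) ^ 2 * (1 + 1 / (p - 1)) := by
    field_simp; ring
  have h2 : Real.sqrt (p * (p - 1)) = (p - 1) * Real.sqrt (1 + 1 / (p - 1)) := by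
    rw [h1, Real.sqrt_mul (sq_nonneg _), Real.sqrt_sq hp0.le]
  unfold GammaF gammaF
  rw [h2]
  field_simp
  ring

lemma gamma_anti (τ : ℝ) (hτ : -2 < τ) : StrictAntiOn (GammaF τ) (Set.Ioi 1) := by
  intro p hp q hq hpq
  simp only [Set.mem_Ioi] at hp hq
  rw [gamma_id τ p hp, gamma_id τ q hq]
  have hp0 : (0:ℝ) < p - 1 := by linarith
  have hq0 : (0:ℝ) < q - 1 := by linarith
  have h1 : 1 / (q - 1) < 1 / (p - 1) := by
    apply one_div_lt_one_div_of_lt hp0; linarith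
  have h2 : Real.sqrt (1 + 1 / (q - 1)) < Real.sqrt (1 + 1 / (p - 1)) :=
    Real.sqrt_lt_sqrt (by positivity) (by linarith)
  have hX : 1 + 1 / (q - 1) + Real.sqrt (1 + 1 / (q - 1))
      < 1 + 1 / (p - 1) + Real.sqrt (1 + 1 / (p - 1)) := by linarith
  have := mul_lt_mul_of_pos_left hX (show (0:ℝ) < 2 * (2 + τ) by linarith)
  linarith

lemma gamma_lim_one (τ : ℝ) (hτ : -2 < τ) :
    Tendsto (GammaF τ) (nhdsWithin 1 (Set.Ioi 1)) atTop := by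
  have ha : (0:ℝ) < 2 + τ := by linarith
  have h1 : Tendsto (fun p : ℝ => p - 1) (nhdsWithin 1 (Set.Ioi 1)) (nhdsWithin 0 (Set.Ioi 0)) := by
    refine tendsto_nhdsWithin_iff.mpr ⟨?_, ?_⟩
    · have : Tendsto (fun p : ℝ => p - 1) (nhds 1) (nhds 0) := by
        have hc : Continuous (fun p : ℝ => p - 1) := by continuity
        simpa using hc.tendsto 1
      exact this.mono_left nhdsWithin_le_nhds
    · filter_upwards [self_mem_nhdsWithin] with p hp
      exact Set.mem_Ioi.mpr (by simpa using sub_pos.mpr (Set.mem_Ioi.mp hp))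
  have h2 : Tendsto (fun p : ℝ => (p - 1)⁻¹) (nhdsWithin 1 (Set.Ioi 1)) atTop :=
    tendsto_inv_nhdsGT_zero.comp h1
  have h3 : Tendsto (fun p : ℝ => 2 * (2 + τ) * (p - 1)⁻¹ + 2) (nhdsWithin 1 (Set.Ioi 1)) atTop :=
    tendsto_atTop_add_const_right _ 2 (h2.const_mul_atTop (by linarith))
  refine tendsto_atTop_mono' _ ?_ h3
  filter_upwards [self_mem_nhdsWithin] with p hp
  have hp' : (1:ℝ) < p := hp
  rw [gamma_id τ p hp']
  have h4 : 0 ≤ Real.sqrt (1 + 1 / (p - 1)) := Real.sqrt_nonneg _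
  have hinv : (p - 1)⁻¹ = 1 / (p - 1) := (one_div _).symm
  rw [hinv]
  nlinarith [h4, ha]

lemma gamma_lim_top (τ : ℝ) (hτ : -2 < τ) :
    Tendsto (GammaF τ) atTop (nhds (10 + 4 * τ)) := by
  have h1 : Tendsto (fun p : ℝ => 1 / (p - 1)) atTop (nhds 0) := by
    have := (tendsto_atTop_add_const_right atTop (-1 : ℝ) tendsto_id).inv_tendsto_atTop
    simpa [one_div, sub_eq_add_neg, Pi.inv_def] using this
  have h2 : Continuous (fun s : ℝ => 2 * (2 + τ) * (1 + s + Real.sqrt (1 + s)) + 2) := by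
    continuity
  have h3 := (h2.tendsto 0).comp h1
  have h4 : 2 * (2 + τ) * (1 + (0:ℝ) + Real.sqrt (1 + 0)) + 2 = 10 + 4 * τ := by
    norm_num [Real.sqrt_one]; ring
  rw [h4] at h3
  refine Tendsto.congr' ?_ h3
  filter_upwards [eventually_gt_atTop 1] with p hp
  exact (gamma_id τ p hp).symm

lemma pplus_facts (τ N' : ℝ) (hτ : -2 < τ) (hN : 10 + 4 * τ < N') :
    1 < Pplus N' τ ∧ GammaF τ (Pplus N' τ) = N' := by
  have ha : (0:ℝ) < 2 + τ := by linarith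
  set a : ℝ := 2 + τ with ha_def
  set r : ℝ := Real.sqrt ((2 + τ) * (2 * N' + τ - 2)) with hr_def
  have hD : 0 ≤ (2 + τ) * (2 * N' + τ - 2) := by nlinarith
  have hr2 : r ^ 2 = (2 + τ) * (2 * N' + τ - 2) := Real.sq_sqrt hD
  have hr0 : 0 ≤ r := Real.sqrt_nonneg _
  have hr3 : 3 * a < r := by nlinarith
  have hden : 0 < (r + a) * (r - 3 * a) := mul_pos (by linarith) (by linarith)
  have hden1 : 0 < (N' - 2) * (N' - 4 * τ - 10) :=
    mul_pos (by linarith) (by linarith)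
  have hP : Pplus N' τ = (r - a) ^ 2 / ((r + a) * (r - 3 * a)) := by
    unfold Pplus
    rw [← hr_def, ← ha_def, div_eq_div_iff (ne_of_gt hden1) (ne_of_gt hden)]
    linear_combination (4*r + 2*τ*r + 4*N' + 2*N'*τ - 32 - 28*τ - 6*τ^2) * hr2
  have hp1 : 1 < Pplus N' τ := by
    rw [hP, lt_div_iff₀ hden]
    nlinarith
  refine ⟨hp1, ?_⟩
  rw [gamma_id τ _ hp1]
  have hsub : Pplus N' τ - 1 = 4 * a ^ 2 / ((r + a) * (r - 3 * a)) := by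
    rw [hP]
    rw [div_sub_one (ne_of_gt hden)]
    ring
  have hs : 1 / (Pplus N' τ - 1) = ((r + a) * (r - 3 * a)) / (4 * a ^ 2) := by
    rw [hsub]
    rw [one_div_div]
  have hsq : 1 + 1 / (Pplus N' τ - 1) = ((r - a) / (2 * a)) ^ 2 := by
    rw [hs]
    field_simp
    ring
  rw [hsq, Real.sqrt_sq (div_nonneg (by linarith) (by linarith))]
  field_simp
  linear_combination (τ+2)*hr2

lemma gamma_mono_tau (τ₁ τ₂ p : ℝ) (hτ : -2 < τ₁) (h12 : τ₁ < τ₂) (hp : 1 < p) :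
    GammaF τ₁ p < GammaF τ₂ p := by
  rw [gamma_id τ₁ p hp, gamma_id τ₂ p hp]
  have hp0 : (0:ℝ) < p - 1 := by linarith
  have h1 : 0 < 1 / (p - 1) := by positivity
  have h2 : 0 ≤ Real.sqrt (1 + 1 / (p - 1)) := Real.sqrt_nonneg _
  nlinarith

/-- properties of `Γ` and monotonicity of `p_c`. For fixed
`τ > -2`: `Γ(p) = 2(2+τ)(1 + 1/(p-1) + √(1 + 1/(p-1))) + 2` for `p > 1`; `Γ` is
strictly decreasing on `(1,∞)`, tends to `+∞` as `p → 1⁺` and to `10 + 4τ` as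
`p → ∞`; for every `N' > 10 + 4τ` there is a unique `p* > 1` with `Γ(p*) = N'`,
namely `p* = p_c(N',τ) = P₊(N',τ)`; and on the region `N' > 10 + 4τ`, `p_c(N',τ)`
is strictly decreasing in `N'` and strictly increasing in `τ`. -/
theorem stmt_18 (τ : ℝ) (hτ : -2 < τ) :
    (∀ p : ℝ, 1 < p →
      GammaF τ p = 2 * (2 + τ) * (1 + 1 / (p - 1) + Real.sqrt (1 + 1 / (p - 1))) + 2) ∧
    StrictAntiOn (GammaF τ) (Set.Ioi 1) ∧
    Filter.Tendsto (GammaF τ) (nhdsWithin 1 (Set.Ioi 1)) Filter.atTop ∧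
    Filter.Tendsto (GammaF τ) Filter.atTop (nhds (10 + 4 * τ)) ∧
    (∀ N' : ℝ, 10 + 4 * τ < N' →
      (∃! p : ℝ, 1 < p ∧ GammaF τ p = N') ∧
      1 < Pplus N' τ ∧ GammaF τ (Pplus N' τ) = N') ∧
    (∀ N₁ N₂ : ℝ, 10 + 4 * τ < N₁ → N₁ < N₂ → Pplus N₂ τ < Pplus N₁ τ) ∧
    (∀ τ₁ τ₂ N' : ℝ, -2 < τ₁ → τ₁ < τ₂ → 10 + 4 * τ₂ < N' →
      Pplus N' τ₁ < Pplus N' τ₂) := by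
  have hanti := gamma_anti τ hτ
  refine ⟨fun p hp => gamma_id τ p hp, hanti, gamma_lim_one τ hτ, gamma_lim_top τ hτ,
    ?_, ?_, ?_⟩
  · intro N' hN
    obtain ⟨hp1, hGp⟩ := pplus_facts τ N' hτ hN
    refine ⟨⟨Pplus N' τ, ⟨hp1, hGp⟩, ?_⟩, hp1, hGp⟩
    rintro q ⟨hq1, hq2⟩
    by_contra hne
    rcases lt_or_gt_of_ne hne with h | h
    · have := hanti (Set.mem_Ioi.mpr hq1) (Set.mem_Ioi.mpr hp1) h
      rw [hq2, hGp] at this; exact lt_irrefl _ this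
    · have := hanti (Set.mem_Ioi.mpr hp1) (Set.mem_Ioi.mpr hq1) h
      rw [hq2, hGp] at this; exact lt_irrefl _ this
  · intro N₁ N₂ hN₁ h12
    obtain ⟨hp1, hG1⟩ := pplus_facts τ N₁ hτ hN₁
    obtain ⟨hp2, hG2⟩ := pplus_facts τ N₂ hτ (by linarith)
    by_contra h
    push_neg at h
    rcases eq_or_lt_of_le h with he | hlt
    · rw [he, hG2] at hG1; linarith
    · have := hanti (Set.mem_Ioi.mpr hp1) (Set.mem_Ioi.mpr hp2) hlt
      rw [hG1, hG2] at this; linarith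
  · intro τ₁ τ₂ N' hτ₁ h12 hN
    have hτ₂ : -2 < τ₂ := by linarith
    obtain ⟨hp1, hG1⟩ := pplus_facts τ₁ N' hτ₁ (by linarith)
    obtain ⟨hp2, hG2⟩ := pplus_facts τ₂ N' hτ₂ hN
    have hcmp : GammaF τ₁ (Pplus N' τ₂) < GammaF τ₂ (Pplus N' τ₂) :=
      gamma_mono_tau τ₁ τ₂ _ hτ₁ h12 hp2
    rw [hG2] at hcmp
    by_contra h
    push_neg at h
    rcases eq_or_lt_of_le h with he | hlt
    · rw [he, hG1] at hcmp; linarith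
    · have := gamma_anti τ₁ hτ₁ (Set.mem_Ioi.mpr hp2) (Set.mem_Ioi.mpr hp1) hlt
      linarith [hG1]

end
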